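/- Let d ≥ 1 and let F : ℝ^d → ℝ^d be a continuous single-valued cyclically quasi-monotone map with F(x) ≠ 0 for every x ∈ ℝ^d. Then for every x ∈ ℝ^d: (i) the set {z : z ≺_F x} is non-empty and contained in the interior of C^F(x), and C^F(x) ≠ ℝ^d; (ii) for every y in the topological boundary of C^F(x), the normal cone to C^F(x) at y equals the ray {t·F(y) : t ≥ 0}; (iii) C^F(x) is unbounded. -/

import Mathlib

open scoped RealInnerProductSpace

/-- Cyclic quasi-monotonicity of a single-valued map `F : ℝ^d → ℝ^d`. -/
def CyclicallyQuasiMonotoneS {d : ℕ}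
    (F : EuclideanSpace ℝ (Fin d) → EuclideanSpace ℝ (Fin d)) : Prop :=
  ∀ (N : ℕ) (x : ℕ → EuclideanSpace ℝ (Fin d)),
    0 < N → x N = x 0 →
    ∃ i < N, ⟪F (x i), x (i + 1) - x i⟫ ≤ 0

/-- `a ≺_F b`: there is an `F`-ascending path from `a` to `b`. -/
def PrecS {d : ℕ} (F : EuclideanSpace ℝ (Fin d) → EuclideanSpace ℝ (Fin d))
    (a b : EuclideanSpace ℝ (Fin d)) : Prop :=
  ∃ (N : ℕ) (x : ℕ → EuclideanSpace ℝ (Fin d)),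
    0 < N ∧ x 0 = a ∧ x N = b ∧ ∀ i < N, 0 < ⟪F (x i), x (i + 1) - x i⟫

/-- `a ⪯_F b`: `{w : w ≺_F a} ⊆ {w : w ≺_F b}`. -/
def PreceqS {d : ℕ} (F : EuclideanSpace ℝ (Fin d) → EuclideanSpace ℝ (Fin d))
    (a b : EuclideanSpace ℝ (Fin d)) : Prop :=
  ∀ w, PrecS F w a → PrecS F w b

/-- The convex set `C^F(x) = {w : w ⪯_F x}`. -/
def CS {d : ℕ} (F : EuclideanSpace ℝ (Fin d) → EuclideanSpace ℝ (Fin d))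
    (x : EuclideanSpace ℝ (Fin d)) : Set (EuclideanSpace ℝ (Fin d)) :=
  {w | PreceqS F w x}

section aux
variable {d : ℕ} {F : EuclideanSpace ℝ (Fin d) → EuclideanSpace ℝ (Fin d)}

lemma prec_step {a b : EuclideanSpace ℝ (Fin d)} (h : 0 < ⟪F a, b - a⟫) : PrecS F a b := by
  refine ⟨1, fun i => if i = 0 then a else b, one_pos, by simp, by simp, ?_⟩
  intro i hi
  interval_cases i
  simpa using h

lemma prec_trans {a b c : EuclideanSpace ℝ (Fin d)} (h1 : PrecS F a b) (h2 : PrecS F b c) :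
    PrecS F a c := by
  obtain ⟨N, u, hN, hu0, huN, hu⟩ := h1
  obtain ⟨M, v, hM, hv0, hvM, hv⟩ := h2
  refine ⟨N + M, fun i => if i < N then u i else v (i - N), by omega, ?_, ?_, ?_⟩
  · simp [hN, hu0]
  · have h : ¬ (N + M < N) := by omega
    simp only [h, if_neg, not_false_iff]
    rw [Nat.add_sub_cancel_left]; exact hvM
  · intro i hi
    by_cases h1i : i + 1 < N
    · have h2i : i < N := by omega
      simp only [h2i, h1i, if_pos]
      exact hu i h2i
    · by_cases h2i : i < N
      · have hiN : i + 1 = N := by omega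
        have he : v (i + 1 - N) = u (i + 1) := by
          rw [hiN, Nat.sub_self, hv0, ← huN]
        simp only [if_pos h2i, if_neg h1i, he]
        exact hu i h2i
      · have hiN : N ≤ i := by omega
        have e1 : i - N + 1 = i + 1 - N := by omega
        simp only [if_neg h2i, if_neg h1i, ← e1]
        exact hv (i - N) (by omega)

lemma not_prec_self (hF : CyclicallyQuasiMonotoneS F) (a : EuclideanSpace ℝ (Fin d)) :
    ¬ PrecS F a a := by
  rintro ⟨N, u, hN, hu0, huN, hu⟩
  obtain ⟨i, hi, hle⟩ := hF N u hN (by rw [huN, hu0])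
  exact absurd (hu i hi) (not_lt.mpr hle)

lemma isOpen_prec_left (hcont : Continuous F) (y : EuclideanSpace ℝ (Fin d)) :
    IsOpen {w : EuclideanSpace ℝ (Fin d) | PrecS F w y} := by
  rw [isOpen_iff_mem_nhds]
  rintro z ⟨N, u, hN, hu0, huN, hu⟩
  have hco : Continuous fun w : EuclideanSpace ℝ (Fin d) => ⟪F w, u 1 - w⟫ :=
    hcont.inner (continuous_const.sub continuous_id)
  have hopen : IsOpen {w : EuclideanSpace ℝ (Fin d) | 0 < ⟪F w, u 1 - w⟫} :=
    isOpen_lt continuous_const hco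
  refine mem_nhds_iff.mpr ⟨_, ?_, hopen, ?_⟩
  · intro w hw
    refine ⟨N, Function.update u 0 w, hN, by simp, ?_, ?_⟩
    · rw [Function.update_of_ne (by omega)]; exact huN
    · intro i hi
      rcases Nat.eq_zero_or_pos i with h0 | h0
      · subst h0
        rw [Function.update_self, Function.update_of_ne (by omega)]
        exact hw
      · rw [Function.update_of_ne (by omega), Function.update_of_ne (by omega)]
        exact hu i hi
  · have h := hu 0 hN
    rw [hu0] at h
    exact h

lemma isOpen_prec_right (hcont : Continuous F) (w : EuclideanSpace ℝ (Fin d)) :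
    IsOpen {y : EuclideanSpace ℝ (Fin d) | PrecS F w y} := by
  rw [isOpen_iff_mem_nhds]
  rintro z ⟨N, u, hN, hu0, huN, hu⟩
  have hopen : IsOpen {y : EuclideanSpace ℝ (Fin d) | 0 < ⟪F (u (N-1)), y - u (N-1)⟫} :=
    isOpen_lt continuous_const (continuous_const.inner (continuous_id.sub continuous_const))
  refine mem_nhds_iff.mpr ⟨_, ?_, hopen, ?_⟩
  · intro y hy
    refine ⟨N, Function.update u N y, hN, ?_, by simp, ?_⟩
    · rw [Function.update_of_ne (by omega)]; exact hu0
    · intro i hi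
      by_cases hiN : i + 1 = N
      · rw [Function.update_of_ne (by omega), hiN, Function.update_self]
        have he : i = N - 1 := by omega
        rw [he]; exact hy
      · rw [Function.update_of_ne (by omega), Function.update_of_ne (by omega)]
        exact hu i hi
  · have h := hu (N-1) (by omega)
    have he : N - 1 + 1 = N := by omega
    rw [he, huN] at h
    exact h

lemma self_mem_CS (x : EuclideanSpace ℝ (Fin d)) : x ∈ CS F x := fun _ hw => hw

lemma mem_CS_of_prec {x y w : EuclideanSpace ℝ (Fin d)} (hy : y ∈ CS F x)
    (h : PrecS F w y) : w ∈ CS F x := fun u hu => hy u (prec_trans hu h)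

lemma isClosed_CS (hcont : Continuous F) (x : EuclideanSpace ℝ (Fin d)) :
    IsClosed (CS F x) := by
  refine isClosed_of_closure_subset ?_
  intro w hw u hu
  obtain ⟨c, hc1, hc2⟩ := _root_.mem_closure_iff.mp hw _ (isOpen_prec_right hcont u) hu
  exact hc2 u hc1

/-- Discrete descent iteration along `-F`. -/
noncomputable def descend (F : EuclideanSpace ℝ (Fin d) → EuclideanSpace ℝ (Fin d))
    (ε : ℝ) (x : EuclideanSpace ℝ (Fin d)) : ℕ → EuclideanSpace ℝ (Fin d)
  | 0 => x
  | n + 1 => descend F ε x n - ε • F (descend F ε x n)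

end aux


section main
variable {d : ℕ} {F : EuclideanSpace ℝ (Fin d) → EuclideanSpace ℝ (Fin d)}

set_option maxHeartbeats 1000000 in
lemma normal_cone_CS (hcont : Continuous F) (hF : CyclicallyQuasiMonotoneS F)
    (hnv : ∀ x, F x ≠ 0) (x : EuclideanSpace ℝ (Fin d))
    (hPint : {z | PrecS F z x} ⊆ interior (CS F x))
    (y : EuclideanSpace ℝ (Fin d)) (hy : y ∈ frontier (CS F x)) :
    {p | ∀ z ∈ CS F x, ⟪p, z - y⟫ ≤ 0} = {p | ∃ t : ℝ, 0 ≤ t ∧ p = t • F y} := by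
  have hinnerpos : ∀ y : EuclideanSpace ℝ (Fin d), 0 < ⟪F y, F y⟫ := by
    intro y
    rw [real_inner_self_eq_norm_sq]
    exact pow_pos (norm_pos_iff.mpr (hnv y)) 2
  have hclosed : IsClosed (CS F x) := isClosed_CS hcont x
  have hyC : y ∈ CS F x := hclosed.frontier_subset hy
  have hyni : y ∉ interior (CS F x) := hy.2
  have hhalf : ∀ z ∈ CS F x, ⟪F y, z - y⟫ ≤ 0 := by
    intro z hz
    by_contra hpos
    push_neg at hpos
    exact hyni (hPint (hz y (prec_step hpos)))
  ext p
  simp only [Set.mem_setOf_eq]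
  constructor
  · intro hp
    have key : ∀ v : EuclideanSpace ℝ (Fin d), ⟪F y, v⟫ < 0 → ⟪p, v⟫ ≤ 0 := by
      intro v hv
      have hg : Continuous fun s : ℝ => ⟪F (y + s • v), v⟫ :=
        (hcont.comp (continuous_const.add (continuous_id.smul continuous_const))).inner
          continuous_const
      have hop : IsOpen {s : ℝ | ⟪F (y + s • v), v⟫ < 0} := isOpen_lt hg continuous_const
      have h0 : (0:ℝ) ∈ {s : ℝ | ⟪F (y + s • v), v⟫ < 0} := by
        simp only [Set.mem_setOf_eq, zero_smul, add_zero]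
        exact hv
      obtain ⟨δ, hδ0, hball⟩ := Metric.isOpen_iff.mp hop 0 h0
      have hs : ⟪F (y + (δ/2) • v), v⟫ < 0 := by
        apply hball
        rw [Metric.mem_ball, Real.dist_eq, sub_zero, abs_of_pos (by linarith)]
        linarith
      have hzy : PrecS F (y + (δ/2) • v) y := by
        apply prec_step
        have he : y - (y + (δ/2) • v) = -((δ/2) • v) := by abel
        rw [he, inner_neg_right, real_inner_smul_right]
        nlinarith
      have hzC : y + (δ/2) • v ∈ CS F x := mem_CS_of_prec hyC hzy
      have hle := hp _ hzC
      rw [add_sub_cancel_left, real_inner_smul_right] at hle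
      nlinarith
    have key2 : ∀ v : EuclideanSpace ℝ (Fin d), ⟪F y, v⟫ ≤ 0 → ⟪p, v⟫ ≤ 0 := by
      intro v hv
      have h3 : ∀ ε : ℝ, 0 < ε → ⟪p, v⟫ ≤ ε * ⟪p, F y⟫ := by
        intro ε hε
        have hkey := key (v - ε • F y) (by
          rw [inner_sub_right, real_inner_smul_right]
          nlinarith [hinnerpos y])
        rw [inner_sub_right, real_inner_smul_right] at hkey
        linarith
      by_contra hc
      push_neg at hc
      rcases le_or_gt ⟪p, F y⟫ 0 with h | h
      · nlinarith [h3 1 one_pos]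
      · have h4 := h3 (⟪p, v⟫ / (2 * ⟪p, F y⟫)) (by positivity)
        have h5 : ⟪p, v⟫ / (2 * ⟪p, F y⟫) * ⟪p, F y⟫ = ⟪p, v⟫ / 2 := by
          have hgen : ∀ a b : ℝ, 0 < b → a / (2*b) * b = a/2 := by
            intro a b hb
            field_simp
          exact hgen _ _ h
        rw [h5] at h4
        linarith
    have htFy : 0 ≤ ⟪p, F y⟫ := by
      have hk := key2 (-F y) (by rw [inner_neg_right]; linarith [hinnerpos y])
      rw [inner_neg_right] at hk
      linarith
    set t : ℝ := ⟪p, F y⟫ / ⟪F y, F y⟫ with htdef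
    have htnn : 0 ≤ t := div_nonneg htFy (hinnerpos y).le
    have hqperp : ⟪F y, p - t • F y⟫ = 0 := by
      have hcanc : t * ⟪F y, F y⟫ = ⟪p, F y⟫ := div_mul_cancel₀ _ (ne_of_gt (hinnerpos y))
      rw [inner_sub_right, real_inner_smul_right, hcanc, real_inner_comm, sub_self]
    have hqq := key2 _ (le_of_eq hqperp)
    have hexp : ⟪p, p - t • F y⟫ =
        ⟪p - t • F y, p - t • F y⟫ + t * ⟪F y, p - t • F y⟫ := by
      have he : p = (p - t • F y) + t • F y := by abel
      calc ⟪p, p - t • F y⟫ = ⟪(p - t • F y) + t • F y, p - t • F y⟫ := by rw [← he]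
        _ = ⟪p - t • F y, p - t • F y⟫ + t * ⟪F y, p - t • F y⟫ := by
            rw [inner_add_left, real_inner_smul_left]
    have hq0 : p - t • F y = 0 := by
      apply real_inner_self_nonpos.mp
      rw [hqperp, mul_zero, add_zero] at hexp
      linarith [hexp ▸ hqq]
    exact ⟨t, htnn, by rw [← sub_eq_zero]; exact hq0⟩
  · rintro ⟨t, ht, rfl⟩ z hz
    rw [real_inner_smul_left]
    have := hhalf z hz
    nlinarith

set_option maxHeartbeats 1000000 in
lemma unbounded_CS (hcont : Continuous F) (hF : CyclicallyQuasiMonotoneS F)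
    (hnv : ∀ x, F x ≠ 0) (x : EuclideanSpace ℝ (Fin d)) :
    ¬ Bornology.IsBounded (CS F x) := by
  intro hB
  have hclosed : IsClosed (CS F x) := isClosed_CS hcont x
  have hCc : IsCompact (CS F x) := Metric.isCompact_of_isClosed_isBounded hclosed hB
  have hxC : x ∈ CS F x := self_mem_CS x
  obtain ⟨aM, haM, hMax⟩ := hCc.exists_isMaxOn ⟨x, hxC⟩ (hcont.norm.continuousOn)
  set M := ‖F aM‖ with hMdef
  have hM : ∀ b ∈ CS F x, ‖F b‖ ≤ M := fun b hb => hMax hb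
  obtain ⟨am, ham, hMin⟩ := hCc.exists_isMinOn ⟨x, hxC⟩ (hcont.norm.continuousOn)
  set m := ‖F am‖ with hmdef
  have hm : ∀ b ∈ CS F x, m ≤ ‖F b‖ := fun b hb => hMin hb
  have hm0 : 0 < m := norm_pos_iff.mpr (hnv am)
  have hM0 : 0 < M := lt_of_lt_of_le hm0 (hM am ham)
  clear_value M m
  clear hMdef hmdef hMax hMin haM ham
  set K := Metric.cthickening 1 (CS F x) with hK
  have hKc : IsCompact K := hCc.cthickening
  have hCK : CS F x ⊆ K := Metric.self_subset_cthickening _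
  have hUC := hKc.uniformContinuousOn_of_continuous hcont.continuousOn
  obtain ⟨δ, hδ0, hδ⟩ := Metric.uniformContinuousOn_iff.mp hUC (m^2 / (2*(M+1)))
    (div_pos (pow_pos hm0 2) (by linarith))
  set η := m^2 / (2*(M+1)) with hηdef
  have hη0 : 0 < η := by rw [hηdef]; exact div_pos (pow_pos hm0 2) (by linarith)
  have hmin0 : 0 < min δ 1 := lt_min hδ0 one_pos
  obtain ⟨ε, hε0, hεM⟩ : ∃ ε : ℝ, 0 < ε ∧ ε * M < min δ 1 := by
    refine ⟨min δ 1 / (M+1), div_pos hmin0 (by linarith), ?_⟩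
    rw [div_mul_eq_mul_div, div_lt_iff₀ (by linarith)]
    nlinarith
  clear_value η
  set z := descend F ε x with hzdef
  have hz0 : z 0 = x := rfl
  have hzsucc : ∀ n, z (n+1) = z n - ε • F (z n) := fun n => rfl
  clear_value z
  have hstepC : ∀ w ∈ CS F x, (w - ε • F w) ∈ CS F x ∧ PrecS F (w - ε • F w) w ∧
      ε * m^2 / 2 ≤ ⟪F (w - ε • F w), w - (w - ε • F w)⟫ := by
    intro w hwC
    have hd1 : dist (w - ε • F w) w ≤ ε * M := by
      rw [dist_eq_norm, sub_sub_cancel_left, norm_neg, norm_smul, Real.norm_eq_abs,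
        abs_of_pos hε0]
      exact mul_le_mul_of_nonneg_left (hM w hwC) hε0.le
    have hwK : w ∈ K := hCK hwC
    have hw'K : (w - ε • F w) ∈ K :=
      Metric.mem_cthickening_of_dist_le _ _ _ _ hwC
        (le_trans hd1 (le_trans hεM.le (min_le_right _ _)))
    have hFd : dist (F (w - ε • F w)) (F w) < η :=
      hδ _ hw'K _ hwK (lt_of_le_of_lt hd1 (hεM.trans_le (min_le_left _ _)))
    have hip : m^2/2 ≤ ⟪F (w - ε • F w), F w⟫ := by
      have h1 : ⟪F (w - ε • F w), F w⟫ = ⟪F w, F w⟫ + ⟪F (w - ε • F w) - F w, F w⟫ := by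
        rw [inner_sub_left]; ring
      have h2 : m^2 ≤ ⟪F w, F w⟫ := by
        rw [real_inner_self_eq_norm_sq]
        nlinarith [hm w hwC, hm0, norm_nonneg (F w)]
      have h3 : |⟪F (w - ε • F w) - F w, F w⟫| ≤ ‖F (w - ε • F w) - F w‖ * ‖F w‖ :=
        abs_real_inner_le_norm _ _
      have h4 : ‖F (w - ε • F w) - F w‖ < η := by rwa [dist_eq_norm] at hFd
      have h5 : ‖F w‖ ≤ M := hM w hwC
      have h6 : η * (M+1) = m^2/2 := by rw [hηdef]; field_simp
      have hb : ‖F (w - ε • F w) - F w‖ * ‖F w‖ ≤ η * M :=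
        mul_le_mul h4.le h5 (norm_nonneg _) hη0.le
      have hb2 : η * M ≤ m^2/2 := by nlinarith
      linarith [neg_abs_le ⟪F (w - ε • F w) - F w, F w⟫, h3, h1, h2]
    have he : w - (w - ε • F w) = ε • F w := sub_sub_cancel _ _
    have hh : ε * (m^2/2) ≤ ε * ⟪F (w - ε • F w), F w⟫ :=
      mul_le_mul_of_nonneg_left hip hε0.le
    have hh0 : 0 < ε * (m^2/2) := mul_pos hε0 (by nlinarith [pow_pos hm0 2])
    have hpos : 0 < ⟪F (w - ε • F w), w - (w - ε • F w)⟫ := by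
      rw [he, real_inner_smul_right]
      linarith
    refine ⟨mem_CS_of_prec hwC (prec_step hpos), prec_step hpos, ?_⟩
    rw [he, real_inner_smul_right]
    linarith
  have hzC : ∀ n, z n ∈ CS F x := by
    intro n
    induction n with
    | zero => rw [hz0]; exact hxC
    | succ n ih => rw [hzsucc]; exact (hstepC _ ih).1
  have hlow : ∀ n, ε * m^2 / 2 ≤ ⟪F (z (n+1)), z n - z (n+1)⟫ := by
    intro n
    have h := (hstepC _ (hzC n)).2.2
    rwa [← hzsucc n] at h
  have hchain : ∀ i j, i < j → PrecS F (z j) (z i) := by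
    intro i j hij
    induction j with
    | zero => omega
    | succ j ih =>
      have hstep : PrecS F (z (j+1)) (z j) := by
        have h := (hstepC _ (hzC j)).2.1
        rwa [← hzsucc j] at h
      rcases Nat.lt_succ_iff_lt_or_eq.mp hij with h | h
      · exact prec_trans hstep (ih h)
      · subst h; exact hstep
  obtain ⟨w, hwC, φ, hφ, hconv⟩ := hCc.tendsto_subseq hzC
  set ρ := ε * m^2 / (8*(M+1)) with hρdef
  have hρ0 : 0 < ρ := div_pos (mul_pos hε0 (pow_pos hm0 2)) (by linarith)
  obtain ⟨N, hN⟩ := Metric.tendsto_atTop.mp hconv ρ hρ0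
  set i := φ N with hidef
  set j := φ (N+2) with hjdef
  have hij : i + 2 ≤ j := by
    have h1 : φ N < φ (N+1) := hφ (by omega)
    have h2 : φ (N+1) < φ (N+2) := hφ (by omega)
    omega
  have hdi : dist (z i) w < ρ := hN N le_rfl
  have hdj : dist (z j) w < ρ := hN (N+2) (by omega)
  have hnear : ‖z j - z i‖ < 2*ρ := by
    calc ‖z j - z i‖ = dist (z j) (z i) := (dist_eq_norm _ _).symm
      _ ≤ dist (z j) w + dist w (z i) := dist_triangle _ _ _
      _ < ρ + ρ := by rw [dist_comm w]; exact add_lt_add hdj hdi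
      _ = 2*ρ := by ring
  have hfin : 0 < ⟪F (z (i+1)), z j - z (i+1)⟫ := by
    have h1 := hlow i
    have h2 : |⟪F (z (i+1)), z j - z i⟫| ≤ ‖F (z (i+1))‖ * ‖z j - z i‖ :=
      abs_real_inner_le_norm _ _
    have h3 : ‖F (z (i+1))‖ ≤ M := hM _ (hzC (i+1))
    have hsplit : ⟪F (z (i+1)), z j - z (i+1)⟫ =
        ⟪F (z (i+1)), z i - z (i+1)⟫ + ⟪F (z (i+1)), z j - z i⟫ := by
      rw [← inner_add_right]
      congr 1
      abel
    have h4 : M * (2*ρ) < ε * m^2 / 2 := by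
      rw [hρdef, show M * (2*(ε * m^2 / (8*(M+1)))) = (ε * m^2) * (2*M) / (8*(M+1)) by ring,
        div_lt_div_iff₀ (by linarith) (by norm_num)]
      nlinarith [mul_pos hε0 (pow_pos hm0 2)]
    have h5 : ‖F (z (i+1))‖ * ‖z j - z i‖ ≤ M * (2*ρ) :=
      mul_le_mul h3 hnear.le (norm_nonneg _) hM0.le
    have h7 : -(M*(2*ρ)) ≤ ⟪F (z (i+1)), z j - z i⟫ := by
      have h8 := neg_abs_le ⟪F (z (i+1)), z j - z i⟫
      linarith [h2.trans h5]
    rw [hsplit]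
    linarith
  exact not_prec_self hF (z j) (prec_trans (hchain (i+1) j (by omega)) (prec_step hfin))

end main

theorem stmt15 (d : ℕ) (hd : 1 ≤ d)
    (F : EuclideanSpace ℝ (Fin d) → EuclideanSpace ℝ (Fin d))
    (hcont : Continuous F) (hF : CyclicallyQuasiMonotoneS F)
    (hnv : ∀ x, F x ≠ 0) (x : EuclideanSpace ℝ (Fin d)) :
    ({z | PrecS F z x}.Nonempty ∧ {z | PrecS F z x} ⊆ interior (CS F x) ∧
      CS F x ≠ Set.univ) ∧
    (∀ y ∈ frontier (CS F x),
      {p | ∀ z ∈ CS F x, ⟪p, z - y⟫ ≤ 0} = {p | ∃ t : ℝ, 0 ≤ t ∧ p = t • F y}) ∧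
    ¬ Bornology.IsBounded (CS F x) := by
  have hinnerpos : ∀ y : EuclideanSpace ℝ (Fin d), 0 < ⟪F y, F y⟫ := by
    intro y
    rw [real_inner_self_eq_norm_sq]
    exact pow_pos (norm_pos_iff.mpr (hnv y)) 2
  have hPsub : {z | PrecS F z x} ⊆ CS F x := fun z hz => mem_CS_of_prec (self_mem_CS x) hz
  have hPint : {z | PrecS F z x} ⊆ interior (CS F x) :=
    interior_maximal hPsub (isOpen_prec_left hcont x)
  have hne : {z | PrecS F z x}.Nonempty := by
    have hg : Continuous fun t : ℝ => ⟪F (x - t • F x), F x⟫ :=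
      (hcont.comp (continuous_const.sub (continuous_id.smul continuous_const))).inner
        continuous_const
    have hop : IsOpen {t : ℝ | 0 < ⟪F (x - t • F x), F x⟫} := isOpen_lt continuous_const hg
    have h0 : (0:ℝ) ∈ {t : ℝ | 0 < ⟪F (x - t • F x), F x⟫} := by
      simp only [Set.mem_setOf_eq, zero_smul, sub_zero]
      exact hinnerpos x
    obtain ⟨δ, hδ0, hball⟩ := Metric.isOpen_iff.mp hop 0 h0
    have ht : δ/2 ∈ {t : ℝ | 0 < ⟪F (x - t • F x), F x⟫} := by
      apply hball
      rw [Metric.mem_ball, Real.dist_eq, sub_zero, abs_of_pos (by linarith)]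
      linarith
    refine ⟨x - (δ/2) • F x, prec_step ?_⟩
    rw [sub_sub_cancel, real_inner_smul_right]
    exact mul_pos (by linarith) ht
  have hneuniv : CS F x ≠ Set.univ := by
    intro h
    have hxw : PrecS F x (x + F x) := by
      apply prec_step
      rw [add_sub_cancel_left]
      exact hinnerpos x
    have hmem : x + F x ∈ CS F x := h ▸ Set.mem_univ _
    exact not_prec_self hF x (hmem x hxw)
  exact ⟨⟨hne, hPint, hneuniv⟩, fun y hy => normal_cone_CS hcont hF hnv x hPint y hy,
    unbounded_CS hcont hF hnv x⟩
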